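/- Let s₀ > 0 and let f : [s₀, ∞) → ℝ be continuously differentiable with f(s₀) > 0 and f′(s) > 0 for all s ≥ s₀, and let g : [s₀, ∞) → ℝ be continuous, nonnegative, and bounded on a neighborhood of s₀. If ∫_{s₀}^{∞} g(s)/f(s)² ds < ∞, then both improper integrals ∫_{s₀}^{∞} ( g(s)/f(s) )·f(s₀)/√( f(s)² − f(s₀)² ) ds and ∫_{s₀}^{∞} ( g(s)/f(s) )·( f(s) − √( f(s)² − f(s₀)² ) ) ds converge. -/

import Mathlib

open MeasureTheory Real Set Filter

/-- Convergence of the Kinar–Schreiber–Sonnenschein integrals: if `f` is `C¹` on `[s₀,∞)`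
with `f(s₀) > 0` and increasing derivative-positivity, `g` is continuous, nonnegative and
bounded near `s₀`, and `∫_{s₀}^{∞} g/f² < ∞`, then the interquark-distance integrand
`(g/f)·f(s₀)/√(f² − f(s₀)²)` and the energy integrand `(g/f)·( f − √(f² − f(s₀)²) )`
are both integrable on `(s₀, ∞)`. -/
theorem kss_integrals_converge (s₀ : ℝ) (hs₀ : 0 < s₀) (f g : ℝ → ℝ)
    (hf : ContDiffOn ℝ 1 f (Ici s₀)) (hf₀ : 0 < f s₀)
    (hf' : ∀ s ∈ Ici s₀, 0 < derivWithin f (Ici s₀) s)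
    (hg : ContinuousOn g (Ici s₀)) (hg0 : ∀ s ∈ Ici s₀, 0 ≤ g s)
    (hgbdd : ∃ M : ℝ, ∀ᶠ s in nhdsWithin s₀ (Ici s₀), |g s| ≤ M)
    (hint : IntegrableOn (fun s => g s / (f s) ^ 2) (Ioi s₀)) :
    IntegrableOn (fun s => (g s / f s) * f s₀ / Real.sqrt ((f s) ^ 2 - (f s₀) ^ 2))
        (Ioi s₀) ∧
    IntegrableOn (fun s => (g s / f s) * (f s - Real.sqrt ((f s) ^ 2 - (f s₀) ^ 2)))
        (Ioi s₀) := by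
  clear hgbdd hs₀
  set T : ℝ := s₀ + 1 with hTdef
  have hsT : s₀ ≤ T := by simp [hTdef]
  have hsT' : s₀ < T := by simp [hTdef]
  have hfc : ContinuousOn f (Ici s₀) := hf.continuousOn
  have hderiv : ∀ x ∈ Ioi s₀, deriv f x = derivWithin f (Ici s₀) x := fun x hx =>
    (derivWithin_of_mem_nhds (Ici_mem_nhds hx)).symm
  have hsm : StrictMonoOn f (Ici s₀) := by
    apply strictMonoOn_of_deriv_pos (convex_Ici s₀) hfc
    intro x hx
    rw [interior_Ici] at hx
    rw [hderiv x hx]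
    exact hf' x (Ioi_subset_Ici_self hx)
  have hmono : MonotoneOn f (Ici s₀) := hsm.monotoneOn
  have hfpos : ∀ s ∈ Ici s₀, 0 < f s := fun s hs =>
    lt_of_lt_of_le hf₀ (hmono self_mem_Ici hs hs)
  have hlt : ∀ s ∈ Ioi s₀, f s₀ < f s := fun s hs => hsm self_mem_Ici (Ioi_subset_Ici_self hs) hs
  have hsq : ∀ s ∈ Ioi s₀, 0 < f s ^ 2 - f s₀ ^ 2 := by
    intro s hs; have h1 := hlt s hs; nlinarith [hf₀]
  have hsqrtpos : ∀ s ∈ Ioi s₀, 0 < Real.sqrt (f s ^ 2 - f s₀ ^ 2) := fun s hs =>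
    Real.sqrt_pos.2 (hsq s hs)
  have hsqrt_sq : ∀ s ∈ Ioi s₀,
      Real.sqrt (f s ^ 2 - f s₀ ^ 2) * Real.sqrt (f s ^ 2 - f s₀ ^ 2) = f s ^ 2 - f s₀ ^ 2 :=
    fun s hs => Real.mul_self_sqrt (hsq s hs).le
  have hsqrt_le : ∀ s ∈ Ioi s₀, Real.sqrt (f s ^ 2 - f s₀ ^ 2) ≤ f s := by
    intro s hs
    have h1 : f s ^ 2 - f s₀ ^ 2 ≤ f s ^ 2 := by nlinarith [hf₀]
    calc Real.sqrt (f s ^ 2 - f s₀ ^ 2) ≤ Real.sqrt (f s ^ 2) := Real.sqrt_le_sqrt h1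
      _ = f s := by rw [Real.sqrt_sq (hfpos s (Ioi_subset_Ici_self hs)).le]
  -- bound M on g over [s₀, T]
  obtain ⟨xM, hxM, hM⟩ := isCompact_Icc.exists_isMaxOn (nonempty_Icc.2 hsT)
    (hg.mono (Icc_subset_Ici_self (a := T) (b := s₀)))
  set M := g xM with hMdef
  have hM0 : 0 ≤ M := hg0 xM (Icc_subset_Ici_self hxM)
  -- lower bound on f near s₀ via derivative minimum
  have hdc : ContinuousOn (derivWithin f (Ici s₀)) (Ici s₀) :=
    hf.continuousOn_derivWithin (uniqueDiffOn_Ici s₀) le_rfl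
  obtain ⟨xc, hxc, hcmin⟩ := isCompact_Icc.exists_isMinOn (nonempty_Icc.2 hsT)
    (hdc.mono (Icc_subset_Ici_self (a := T) (b := s₀)))
  set c := derivWithin f (Ici s₀) xc with hcdef
  have hc : 0 < c := hf' xc (Icc_subset_Ici_self hxc)
  have hlow : ∀ s ∈ Icc s₀ T, c * (s - s₀) ≤ f s - f s₀ := by
    intro s hs
    refine (convex_Icc s₀ T).mul_sub_le_image_sub_of_le_deriv
      (hfc.mono Icc_subset_Ici_self) ?_ ?_ s₀ (left_mem_Icc.2 hsT) s hs hs.1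
    · intro x hx
      rw [interior_Icc] at hx
      exact ((hf.differentiableOn one_ne_zero x (le_of_lt hx.1)).differentiableAt
        (Ici_mem_nhds hx.1)).differentiableWithinAt
    · intro x hx
      rw [interior_Icc] at hx
      rw [hderiv x hx.1]
      exact hcmin ⟨le_of_lt hx.1, le_of_lt hx.2⟩
  have hsl : ∀ s ∈ Ioc s₀ T,
      Real.sqrt (2 * f s₀ * c) * Real.sqrt (s - s₀) ≤ Real.sqrt (f s ^ 2 - f s₀ ^ 2) := by
    intro s hs
    rw [← Real.sqrt_mul (by positivity)]
    apply Real.sqrt_le_sqrt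
    have h1 := hlow s ⟨hs.1.le, hs.2⟩
    have h2 : f s₀ ≤ f s := (hlt s hs.1).le
    have h3 : 0 ≤ s - s₀ := by linarith [hs.1]
    have h4 := mul_le_mul h1 (by linarith : 2 * f s₀ ≤ f s + f s₀) (by positivity)
      (by linarith : (0:ℝ) ≤ f s - f s₀)
    nlinarith [h4]
  -- continuity of integrands on Ioi s₀
  have hFc : ContinuousOn (fun s => Real.sqrt (f s ^ 2 - f s₀ ^ 2)) (Ici s₀) :=
    Real.continuous_sqrt.comp_continuousOn ((hfc.pow 2).sub continuousOn_const)
  have hf1c : ContinuousOn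
      (fun s => (g s / f s) * f s₀ / Real.sqrt (f s ^ 2 - f s₀ ^ 2)) (Ioi s₀) := by
    apply ContinuousOn.div
    · exact ((hg.mono Ioi_subset_Ici_self).div (hfc.mono Ioi_subset_Ici_self)
        (fun x hx => (hfpos x (Ioi_subset_Ici_self hx)).ne')).mul continuousOn_const
    · exact hFc.mono Ioi_subset_Ici_self
    · exact fun x hx => (hsqrtpos x hx).ne'
  have hf2c : ContinuousOn
      (fun s => (g s / f s) * (f s - Real.sqrt (f s ^ 2 - f s₀ ^ 2))) (Ioi s₀) :=
    ((hg.mono Ioi_subset_Ici_self).div (hfc.mono Ioi_subset_Ici_self)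
        (fun x hx => (hfpos x (Ioi_subset_Ici_self hx)).ne')).mul
      ((hfc.mono Ioi_subset_Ici_self).sub (hFc.mono Ioi_subset_Ici_self))
  -- integrability of (s - s₀)^(-1/2) near s₀
  have hrint : IntegrableOn (fun s => (s - s₀) ^ (-(1/2) : ℝ)) (Ioc s₀ T) := by
    have h0 : IntervalIntegrable (fun x : ℝ => x ^ (-(1/2) : ℝ)) volume 0 (T - s₀) :=
      intervalIntegral.intervalIntegrable_rpow' (by norm_num)
    have h1 := h0.comp_sub_right s₀
    simp only [zero_add, sub_add_cancel] at h1
    rwa [intervalIntegrable_iff_integrableOn_Ioc_of_le hsT] at h1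
  -- near-piece 1
  have hnear1 : IntegrableOn
      (fun s => (g s / f s) * f s₀ / Real.sqrt (f s ^ 2 - f s₀ ^ 2)) (Ioc s₀ T) := by
    refine Integrable.mono' (hrint.const_mul (M / Real.sqrt (2 * f s₀ * c)))
      ((hf1c.mono Ioc_subset_Ioi_self).aestronglyMeasurable measurableSet_Ioc) ?_
    refine (ae_restrict_iff' measurableSet_Ioc).2 (ae_of_all _ fun s hs => ?_)
    have hsIoi : s ∈ Ioi s₀ := hs.1
    have hfs : 0 < f s := hfpos s (le_of_lt hs.1)
    have h0 : 0 ≤ (g s / f s) * f s₀ / Real.sqrt (f s ^ 2 - f s₀ ^ 2) :=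
      div_nonneg (mul_nonneg (div_nonneg (hg0 s (le_of_lt hs.1)) hfs.le) hf₀.le)
        (Real.sqrt_nonneg _)
    rw [Real.norm_eq_abs, abs_of_nonneg h0]
    have hnum : (g s / f s) * f s₀ ≤ M := by
      have e : g s / f s * f s₀ = g s * (f s₀ / f s) := by ring
      rw [e]
      calc g s * (f s₀ / f s) ≤ g s * 1 := by
            apply mul_le_mul_of_nonneg_left _ (hg0 s (le_of_lt hs.1))
            exact div_le_one_of_le₀ (hlt s hs.1).le hfs.le
        _ = g s := mul_one _
        _ ≤ M := hM ⟨hs.1.le, hs.2⟩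
    have hd : 0 < Real.sqrt (2 * f s₀ * c) * Real.sqrt (s - s₀) := by
      apply mul_pos (Real.sqrt_pos.2 (by positivity)) (Real.sqrt_pos.2 (by linarith [hs.1]))
    have hstep : (g s / f s) * f s₀ / Real.sqrt (f s ^ 2 - f s₀ ^ 2)
        ≤ M / (Real.sqrt (2 * f s₀ * c) * Real.sqrt (s - s₀)) :=
      div_le_div₀ hM0 hnum hd (hsl s hs)
    refine hstep.trans (le_of_eq ?_)
    rw [show ((s - s₀) ^ (-(1/2) : ℝ)) = (Real.sqrt (s - s₀))⁻¹ by
      rw [Real.sqrt_eq_rpow, ← Real.rpow_neg (by linarith [hs.1] : (0:ℝ) ≤ s - s₀)]]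
    rw [← div_div, div_eq_mul_inv (M / Real.sqrt (2 * f s₀ * c))]
  -- near-piece 2
  have hnear2 : IntegrableOn
      (fun s => (g s / f s) * (f s - Real.sqrt (f s ^ 2 - f s₀ ^ 2))) (Ioc s₀ T) := by
    have hconst : IntegrableOn (fun _ : ℝ => M) (Ioc s₀ T) volume :=
      integrableOn_const measure_Ioc_lt_top.ne
    refine Integrable.mono' hconst
      ((hf2c.mono Ioc_subset_Ioi_self).aestronglyMeasurable measurableSet_Ioc) ?_
    refine (ae_restrict_iff' measurableSet_Ioc).2 (ae_of_all _ fun s hs => ?_)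
    have hfs : 0 < f s := hfpos s (le_of_lt hs.1)
    have h0 : 0 ≤ (g s / f s) * (f s - Real.sqrt (f s ^ 2 - f s₀ ^ 2)) :=
      mul_nonneg (div_nonneg (hg0 s (le_of_lt hs.1)) hfs.le)
        (sub_nonneg.2 (hsqrt_le s hs.1))
    rw [Real.norm_eq_abs, abs_of_nonneg h0]
    calc (g s / f s) * (f s - Real.sqrt (f s ^ 2 - f s₀ ^ 2))
        ≤ (g s / f s) * f s := by
          apply mul_le_mul_of_nonneg_left _ (div_nonneg (hg0 s (le_of_lt hs.1)) hfs.le)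
          exact sub_le_self _ (Real.sqrt_nonneg _)
      _ = g s := div_mul_cancel₀ _ hfs.ne'
      _ ≤ M := hM ⟨hs.1.le, hs.2⟩
  -- tail facts
  have hTmem : T ∈ Ioi s₀ := hsT'
  have hb : f s₀ < f T := hlt T hTmem
  have hbpos : 0 < f T := hfpos T hsT
  have hY : 0 < Real.sqrt (f T ^ 2 - f s₀ ^ 2) := Real.sqrt_pos.2 (by nlinarith)
  set Y := Real.sqrt (f T ^ 2 - f s₀ ^ 2) with hYdef
  have hYsq : Y * Y = f T ^ 2 - f s₀ ^ 2 := Real.mul_self_sqrt (by nlinarith)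
  have hintT : IntegrableOn (fun s => g s / f s ^ 2) (Ioi T) :=
    hint.mono_set (Ioi_subset_Ioi hsT)
  have hkey : ∀ s ∈ Ioi T, Y * f s ≤ f T * Real.sqrt (f s ^ 2 - f s₀ ^ 2) := by
    intro s hs
    have hsIoi : s ∈ Ioi s₀ := lt_trans hsT' hs
    have hfs : 0 < f s := hfpos s (Ioi_subset_Ici_self hsIoi)
    have hbf : f T ≤ f s := hmono hsT (Ioi_subset_Ici_self hsIoi) (Ioi_subset_Ici_self hs)
    have e1 : Y * f s = Real.sqrt ((f T ^ 2 - f s₀ ^ 2) * f s ^ 2) := by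
      rw [Real.sqrt_mul (by nlinarith) (f s ^ 2), Real.sqrt_sq hfs.le]
    have e2 : f T * Real.sqrt (f s ^ 2 - f s₀ ^ 2)
        = Real.sqrt (f T ^ 2 * (f s ^ 2 - f s₀ ^ 2)) := by
      rw [Real.sqrt_mul (sq_nonneg _), Real.sqrt_sq hbpos.le]
    rw [e1, e2]
    apply Real.sqrt_le_sqrt
    nlinarith [mul_le_mul_of_nonneg_left (mul_le_mul hbf hbf hbpos.le hfs.le) (sq_nonneg (f s₀))]
  -- tail-piece 1
  have htail1 : IntegrableOn
      (fun s => (g s / f s) * f s₀ / Real.sqrt (f s ^ 2 - f s₀ ^ 2)) (Ioi T) := by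
    refine Integrable.mono' (hintT.const_mul (f s₀ * f T / Y))
      ((hf1c.mono (Ioi_subset_Ioi hsT)).aestronglyMeasurable measurableSet_Ioi) ?_
    refine (ae_restrict_iff' measurableSet_Ioi).2 (ae_of_all _ fun s hs => ?_)
    have hsIoi : s ∈ Ioi s₀ := lt_trans hsT' hs
    have hfs : 0 < f s := hfpos s (Ioi_subset_Ici_self hsIoi)
    have hX : 0 < Real.sqrt (f s ^ 2 - f s₀ ^ 2) := hsqrtpos s hsIoi
    have hgs : 0 ≤ g s := hg0 s (Ioi_subset_Ici_self hsIoi)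
    have h0 : 0 ≤ (g s / f s) * f s₀ / Real.sqrt (f s ^ 2 - f s₀ ^ 2) :=
      div_nonneg (mul_nonneg (div_nonneg hgs hfs.le) hf₀.le) (Real.sqrt_nonneg _)
    rw [Real.norm_eq_abs, abs_of_nonneg h0]
    have e1 : (g s / f s) * f s₀ / Real.sqrt (f s ^ 2 - f s₀ ^ 2)
        = g s * f s₀ / (f s * Real.sqrt (f s ^ 2 - f s₀ ^ 2)) := by
      rw [div_mul_eq_mul_div, div_div]
    have e2 : f s₀ * f T / Y * (g s / f s ^ 2) = f s₀ * f T * g s / (Y * f s ^ 2) :=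
      div_mul_div_comm _ _ _ _
    rw [e1, e2, div_le_div_iff₀ (by positivity) (by positivity)]
    have hkey' := hkey s hs
    nlinarith [mul_le_mul_of_nonneg_left hkey' (mul_nonneg (mul_nonneg hgs hf₀.le) hfs.le)]
  -- tail-piece 2
  have htail2 : IntegrableOn
      (fun s => (g s / f s) * (f s - Real.sqrt (f s ^ 2 - f s₀ ^ 2))) (Ioi T) := by
    refine Integrable.mono' (hintT.const_mul (f s₀ ^ 2))
      ((hf2c.mono (Ioi_subset_Ioi hsT)).aestronglyMeasurable measurableSet_Ioi) ?_
    refine (ae_restrict_iff' measurableSet_Ioi).2 (ae_of_all _ fun s hs => ?_)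
    have hsIoi : s ∈ Ioi s₀ := lt_trans hsT' hs
    have hfs : 0 < f s := hfpos s (Ioi_subset_Ici_self hsIoi)
    have hgs : 0 ≤ g s := hg0 s (Ioi_subset_Ici_self hsIoi)
    have hXle := hsqrt_le s hsIoi
    have hXsq := hsqrt_sq s hsIoi
    have hXnn : 0 ≤ Real.sqrt (f s ^ 2 - f s₀ ^ 2) := Real.sqrt_nonneg _
    have h0 : 0 ≤ (g s / f s) * (f s - Real.sqrt (f s ^ 2 - f s₀ ^ 2)) :=
      mul_nonneg (div_nonneg hgs hfs.le) (sub_nonneg.2 hXle)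
    rw [Real.norm_eq_abs, abs_of_nonneg h0]
    have h1 : (f s - Real.sqrt (f s ^ 2 - f s₀ ^ 2)) * f s ≤ f s₀ ^ 2 := by
      nlinarith [mul_le_mul_of_nonneg_left hXle hXnn]
    have e1 : (g s / f s) * (f s - Real.sqrt (f s ^ 2 - f s₀ ^ 2))
        = g s * (f s - Real.sqrt (f s ^ 2 - f s₀ ^ 2)) / f s := by
      rw [div_mul_eq_mul_div]
    have e2 : f s₀ ^ 2 * (g s / f s ^ 2) = f s₀ ^ 2 * g s / f s ^ 2 := by
      rw [mul_div_assoc]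
    rw [e1, e2, div_le_div_iff₀ hfs (by positivity)]
    nlinarith [mul_le_mul_of_nonneg_left h1 (mul_nonneg hgs hfs.le)]
  constructor
  · have h := hnear1.union htail1
    rwa [Ioc_union_Ioi_eq_Ioi hsT] at h
  · have h := hnear2.union htail2
    rwa [Ioc_union_Ioi_eq_Ioi hsT] at h
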